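/- arXiv:1401.7074 — 5 statements merged into one kernel-verified Lean document; each statement's English description precedes it below -/
import Mathlib

section
/- Let L ≥ 1, ρ > 0, a ∈ ℂ^L, and let h₁, h₂ ∈ ℂ^L satisfy ‖h₁‖ = ‖h₂‖ and |⟨h₁,a⟩| ≥ |⟨h₂,a⟩|. Then inf_{α ∈ ℂ} ( ρ‖α h₁ − a‖² + |α|² ) ≤ inf_{α ∈ ℂ} ( ρ‖α h₂ − a‖² + |α|² ), and consequently sup_{α ∈ ℂ} log⁺( ρ / (ρ‖α h₁ − a‖² + |α|²) ) ≥ sup_{α ∈ ℂ} log⁺( ρ / (ρ‖α h₂ − a‖² + |α|²) ). -/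
open Complex Finset

/-- The effective-noise energy `Q(α) = ρ‖αh − a‖² + |α|²`. -/
noncomputable def effNoise {L : ℕ} (ρ : ℝ) (h a : Fin L → ℂ) (α : ℂ) : ℝ :=
  ρ * ∑ ℓ, ‖α * h ℓ - a ℓ‖ ^ 2 + ‖α‖ ^ 2

lemma effNoise_eq {L : ℕ} (ρ : ℝ) (h a : Fin L → ℂ) (α : ℂ) :
    effNoise ρ h a α = ρ * (‖α‖^2 * ∑ ℓ, ‖h ℓ‖^2
      - 2 * (α * ∑ ℓ, h ℓ * (starRingEnd ℂ) (a ℓ)).re + ∑ ℓ, ‖a ℓ‖^2) + ‖α‖^2 := by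
  unfold effNoise
  congr 2
  have e1 : ∀ z : ℂ, ‖z‖^2 = Complex.normSq z := fun z => by
    rw [Complex.sq_norm]
  have step : ∀ ℓ : Fin L, ‖α * h ℓ - a ℓ‖^2
      = ‖α‖^2 * ‖h ℓ‖^2 + ‖a ℓ‖^2 - 2 * (α * (h ℓ * (starRingEnd ℂ) (a ℓ))).re := by
    intro ℓ
    rw [e1 (α * h ℓ - a ℓ), e1 (h ℓ), e1 (a ℓ), e1 α, Complex.normSq_sub, Complex.normSq_mul,
      mul_assoc]
  have e2 : (α * ∑ ℓ, h ℓ * (starRingEnd ℂ) (a ℓ)).re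
      = ∑ ℓ, (α * (h ℓ * (starRingEnd ℂ) (a ℓ))).re := by
    rw [Finset.mul_sum, Complex.re_sum]
  rw [Finset.sum_congr rfl (fun ℓ _ => step ℓ), e2, Finset.mul_sum]
  rw [Finset.sum_sub_distrib, Finset.sum_add_distrib, ← Finset.mul_sum, Finset.mul_sum]
  ring_nf
  rw [← Finset.sum_mul]

lemma effNoise_nonneg {L : ℕ} {ρ : ℝ} (hρ : 0 < ρ) (h a : Fin L → ℂ) (α : ℂ) :
    0 ≤ effNoise ρ h a α := by
  unfold effNoise; positivity

/-- Cauchy–Schwarz for the Hermitian pairing. -/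
lemma cs_bound {L : ℕ} (h a : Fin L → ℂ) :
    ‖∑ ℓ, h ℓ * (starRingEnd ℂ) (a ℓ)‖ ^ 2 ≤ (∑ ℓ, ‖h ℓ‖^2) * (∑ ℓ, ‖a ℓ‖^2) := by
  have h1 : ‖∑ ℓ, h ℓ * (starRingEnd ℂ) (a ℓ)‖ ≤ ∑ ℓ, ‖h ℓ‖ * ‖a ℓ‖ := by
    refine (norm_sum_le _ _).trans (le_of_eq ?_)
    refine Finset.sum_congr rfl fun ℓ _ => ?_
    rw [norm_mul, RCLike.norm_conj]
  calc ‖∑ ℓ, h ℓ * (starRingEnd ℂ) (a ℓ)‖ ^ 2 ≤ (∑ ℓ, ‖h ℓ‖ * ‖a ℓ‖) ^ 2 := by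
        apply pow_le_pow_left₀ (norm_nonneg _) h1
    _ ≤ (∑ ℓ, ‖h ℓ‖^2) * (∑ ℓ, ‖a ℓ‖^2) := Finset.sum_mul_sq_le_sq_mul_sq _ _ _

/-- Lower bound on the effective noise. -/
lemma effNoise_lower {L : ℕ} {ρ : ℝ} (hρ : 0 < ρ) (h a : Fin L → ℂ) (α : ℂ) :
    ρ * (∑ ℓ, ‖a ℓ‖^2) / (ρ * (∑ ℓ, ‖h ℓ‖^2) + 1) ≤ effNoise ρ h a α := by
  set H := ∑ ℓ, ‖h ℓ‖^2 with hHdef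
  set A := ∑ ℓ, ‖a ℓ‖^2 with hAdef
  set S := ∑ ℓ, h ℓ * (starRingEnd ℂ) (a ℓ) with hSdef
  have hH : 0 ≤ H := Finset.sum_nonneg fun _ _ => by positivity
  have hA : 0 ≤ A := Finset.sum_nonneg fun _ _ => by positivity
  have hD : 0 < ρ * H + 1 := by positivity
  have hre : (α * S).re ≤ ‖α‖ * ‖S‖ := by
    calc (α * S).re ≤ ‖α * S‖ := Complex.re_le_norm _
      _ = ‖α‖ * ‖S‖ := norm_mul _ _
  have cs : ‖S‖^2 ≤ H * A := cs_bound h a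
  rw [effNoise_eq, div_le_iff₀ hD]
  nlinarith [sq_nonneg ((ρ * H + 1) * ‖α‖ - ρ * ‖S‖), norm_nonneg S, norm_nonneg α,
    mul_le_mul_of_nonneg_left cs (by positivity : (0:ℝ) ≤ ρ^2),
    mul_le_mul_of_nonneg_left hre (by positivity : (0:ℝ) ≤ 2 * ρ * (ρ * H + 1))]

lemma exists_le {L : ℕ} {ρ : ℝ} (hρ : 0 < ρ) (h₁ h₂ a : Fin L → ℂ)
    (hnorm : ∑ ℓ, ‖h₁ ℓ‖ ^ 2 = ∑ ℓ, ‖h₂ ℓ‖ ^ 2)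
    (hip : ‖∑ ℓ, h₂ ℓ * (starRingEnd ℂ) (a ℓ)‖ ≤ ‖∑ ℓ, h₁ ℓ * (starRingEnd ℂ) (a ℓ)‖)
    (α : ℂ) : ∃ β : ℂ, effNoise ρ h₁ a β ≤ effNoise ρ h₂ a α := by
  set S₁ := ∑ ℓ, h₁ ℓ * (starRingEnd ℂ) (a ℓ) with hS1
  set S₂ := ∑ ℓ, h₂ ℓ * (starRingEnd ℂ) (a ℓ) with hS2
  have hre2 : (α * S₂).re ≤ ‖α‖ * ‖S₁‖ := by
    calc (α * S₂).re ≤ ‖α * S₂‖ := Complex.re_le_norm _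
      _ = ‖α‖ * ‖S₂‖ := norm_mul _ _
      _ ≤ ‖α‖ * ‖S₁‖ := by
          exact mul_le_mul_of_nonneg_left hip (norm_nonneg _)
  by_cases hS : S₁ = 0
  · refine ⟨α, ?_⟩
    rw [effNoise_eq, effNoise_eq, hnorm, ← hS1, ← hS2, hS]
    have : (α * S₂).re ≤ 0 := by simpa [hS] using hre2
    simp only [mul_zero, Complex.zero_re]
    nlinarith [this]
  · refine ⟨(↑(‖α‖ / ‖S₁‖) : ℂ) * (starRingEnd ℂ) S₁, ?_⟩
    have hS1pos : 0 < ‖S₁‖ := norm_pos_iff.mpr hS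
    have hnormβ : ‖(↑(‖α‖ / ‖S₁‖) : ℂ) * (starRingEnd ℂ) S₁‖ = ‖α‖ := by
      simp only [norm_mul, RCLike.norm_conj, Complex.norm_real, Real.norm_eq_abs]
      rw [abs_div, abs_norm, abs_norm, div_mul_cancel₀ _ hS1pos.ne']
    have hreβ : (((↑(‖α‖ / ‖S₁‖) : ℂ) * (starRingEnd ℂ) S₁) * S₁).re = ‖α‖ * ‖S₁‖ := by
      have : (starRingEnd ℂ) S₁ * S₁ = (↑(‖S₁‖^2) : ℂ) := by
        rw [mul_comm, Complex.mul_conj, Complex.normSq_eq_norm_sq]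
      rw [mul_assoc, this, ← Complex.ofReal_mul, Complex.ofReal_re,
        div_mul_eq_mul_div, pow_two, ← mul_assoc, mul_div_assoc,
        div_self hS1pos.ne', mul_one]
    rw [effNoise_eq, effNoise_eq, hnorm, ← hS1, ← hS2, hnormβ, hreβ]
    nlinarith [hre2]

/-- if `‖h₁‖ = ‖h₂‖` and `|⟨h₁,a⟩| ≥ |⟨h₂,a⟩|`, then the minimal
effective-noise energy for `h₁` is at most that for `h₂`, and consequently the
computation rate for `h₁` is at least that for `h₂`. -/
theorem rate_mono_of_inner_ge (L : ℕ) (hL : 1 ≤ L) (ρ : ℝ) (hρ : 0 < ρ)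
    (h₁ h₂ a : Fin L → ℂ)
    (hnorm : ∑ ℓ, ‖h₁ ℓ‖ ^ 2 = ∑ ℓ, ‖h₂ ℓ‖ ^ 2)
    (hip : ‖∑ ℓ, h₂ ℓ * (starRingEnd ℂ) (a ℓ)‖ ≤ ‖∑ ℓ, h₁ ℓ * (starRingEnd ℂ) (a ℓ)‖) :
    (⨅ α : ℂ, effNoise ρ h₁ a α) ≤ (⨅ α : ℂ, effNoise ρ h₂ a α) ∧
    (⨆ α : ℂ, max (Real.log (ρ / effNoise ρ h₁ a α)) 0) ≥
      (⨆ α : ℂ, max (Real.log (ρ / effNoise ρ h₂ a α)) 0) := by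
  have bdd₁ : BddBelow (Set.range fun α : ℂ => effNoise ρ h₁ a α) := by
    refine ⟨0, ?_⟩
    rintro x ⟨α, rfl⟩
    exact effNoise_nonneg hρ h₁ a α
  constructor
  · refine le_ciInf fun α => ?_
    obtain ⟨β, hβ⟩ := exists_le hρ h₁ h₂ a hnorm hip α
    exact (ciInf_le bdd₁ β).trans hβ
  · by_cases hA : (∑ ℓ, ‖a ℓ‖^2) = 0
    · -- a = 0, so both functions coincide
      have ha : ∀ ℓ, a ℓ = 0 := by
        intro ℓ
        have := (Finset.sum_eq_zero_iff_of_nonneg (fun i _ => by positivity)).mp hA ℓ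
          (Finset.mem_univ ℓ)
        have h2 : ‖a ℓ‖ = 0 := by nlinarith [norm_nonneg (a ℓ)]
        exact norm_eq_zero.mp h2
    
      have hfun : ∀ α, effNoise ρ h₁ a α = effNoise ρ h₂ a α := by
        intro α
        rw [effNoise_eq, effNoise_eq, hnorm]
        simp [ha]
      simp only [hfun, ge_iff_le, le_refl]
    · have hApos : 0 < ∑ ℓ, ‖a ℓ‖^2 :=
        lt_of_le_of_ne (Finset.sum_nonneg fun _ _ => by positivity) (Ne.symm hA)
      set A := ∑ ℓ, ‖a ℓ‖^2
      set H := ∑ ℓ, ‖h₁ ℓ‖^2 with hHdef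
      have hH : 0 ≤ H := Finset.sum_nonneg fun _ _ => by positivity
      set c := ρ * A / (ρ * H + 1) with hcdef
      have hden : 0 < ρ * H + 1 := by nlinarith
      have hc : 0 < c := div_pos (mul_pos hρ hApos) hden
      have hlow : ∀ α, c ≤ effNoise ρ h₁ a α := fun α => effNoise_lower hρ h₁ a α
      have bddA : BddAbove (Set.range fun α : ℂ => max (Real.log (ρ / effNoise ρ h₁ a α)) 0) := by
        refine ⟨max (Real.log (ρ / c)) 0, ?_⟩
        rintro x ⟨α, rfl⟩
        refine max_le_max ?_ le_rfl
        have h1 : 0 < effNoise ρ h₁ a α := hc.trans_le (hlow α)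
        exact Real.log_le_log (div_pos hρ h1)
          (div_le_div_of_nonneg_left hρ.le hc (hlow α))
      refine ciSup_le fun α => ?_
      obtain ⟨β, hβ⟩ := exists_le hρ h₁ h₂ a hnorm hip α
      have h1 : 0 < effNoise ρ h₁ a β := hc.trans_le (hlow β)
      have h2 : 0 < effNoise ρ h₂ a α := h1.trans_le hβ
      have step : max (Real.log (ρ / effNoise ρ h₂ a α)) 0
          ≤ max (Real.log (ρ / effNoise ρ h₁ a β)) 0 := by
        refine max_le_max ?_ le_rfl
        exact Real.log_le_log (div_pos hρ h2)
          (div_le_div_of_nonneg_left hρ.le h1 hβ)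
      exact step.trans (le_ciSup bddA β)
end

section
/- Let L ≥ 1, ρ > 0, h ∈ ℂ^L, and let a ∈ ℂ^L be nonzero. Define h' ∈ ℂ^L componentwise by h'_ℓ := |h_ℓ|·a_ℓ/|a_ℓ| if a_ℓ ≠ 0 and h'_ℓ := |h_ℓ| if a_ℓ = 0 (so h'_ℓ = h_ℓ e^{iφ_ℓ^{opt}} with the optimal phases φ_ℓ^{opt} = arg(a_ℓ) − arg(h_ℓ)). Then the phase precoded computation rate is at least the original computation rate: sup_{α ∈ ℂ} log⁺( ρ / (ρ‖α h' − a‖² + |α|²) ) ≥ sup_{α ∈ ℂ} log⁺( ρ / (ρ‖α h − a‖² + |α|²) ). -/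
open Complex Finset

lemma key_term (α hc ac h'c : ℂ)
    (hh' : h'c = if ac = 0 then ((‖hc‖ : ℝ) : ℂ)
        else ((‖hc‖ : ℝ) : ℂ) * ac / ((‖ac‖ : ℝ) : ℂ)) :
    ‖((‖α‖ : ℝ) : ℂ) * h'c - ac‖ ≤ ‖α * hc - ac‖ := by
  by_cases hac : ac = 0
  · subst hac
    rw [hh', if_pos rfl]
    simp [norm_mul, Complex.norm_real]
  · rw [hh', if_neg hac]
    have hA : (0:ℝ) < ‖ac‖ := norm_pos_iff.mpr hac
    have heq : ((‖α‖ : ℝ) : ℂ) * (((‖hc‖ : ℝ) : ℂ) * ac / ((‖ac‖ : ℝ) : ℂ)) - ac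
        = (((‖α‖ * ‖hc‖ - ‖ac‖ : ℝ)) : ℂ) / ((‖ac‖ : ℝ) : ℂ) * ac := by
      have : ((‖ac‖ : ℝ) : ℂ) ≠ 0 := by exact_mod_cast hA.ne'
      have h2 : ((‖ac‖ : ℝ) : ℂ) ≠ 0 :=
        Complex.ofReal_ne_zero.mpr (norm_ne_zero_iff.mpr hac)
      field_simp
      push_cast
      ring
    rw [heq]
    have : ‖(((‖α‖ * ‖hc‖ - ‖ac‖ : ℝ)) : ℂ) / ((‖ac‖ : ℝ) : ℂ) * ac‖
        = |‖α‖ * ‖hc‖ - ‖ac‖| := by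
      rw [norm_mul, norm_div, Complex.norm_real, Complex.norm_real,
        Real.norm_eq_abs, Real.norm_eq_abs, _root_.abs_of_pos hA,
        div_mul_cancel₀ _ hA.ne']
    rw [this]
    calc |‖α‖ * ‖hc‖ - ‖ac‖| = |‖α * hc‖ - ‖ac‖| := by rw [norm_mul]
      _ ≤ ‖α * hc - ac‖ := abs_norm_sub_norm_le _ _

/-- with the optimally phase-precoded channel
`h'_ℓ = |h_ℓ| a_ℓ/|a_ℓ|` (and `h'_ℓ = |h_ℓ|` when `a_ℓ = 0`), the phase
precoded computation rate is at least the original computation rate. -/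
theorem precoded_rate_ge_rate (L : ℕ) (hL : 1 ≤ L) (ρ : ℝ) (hρ : 0 < ρ)
    (h a : Fin L → ℂ) (ha : a ≠ 0) (h' : Fin L → ℂ)
    (hh' : ∀ ℓ, h' ℓ = if a ℓ = 0 then ((‖h ℓ‖ : ℝ) : ℂ)
        else ((‖h ℓ‖ : ℝ) : ℂ) * a ℓ / ((‖a ℓ‖ : ℝ) : ℂ)) :
    (⨆ α : ℂ, max (Real.log (ρ / effNoise ρ h' a α)) 0) ≥
      (⨆ α : ℂ, max (Real.log (ρ / effNoise ρ h a α)) 0) := by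
  obtain ⟨ℓ0, hℓ0⟩ : ∃ ℓ, a ℓ ≠ 0 := by
    by_contra hc
    push_neg at hc
    exact ha (funext hc)
  set A : ℝ := ‖a ℓ0‖ with hA
  have hA0 : 0 < A := norm_pos_iff.mpr hℓ0
  set H : ℝ := ‖h' ℓ0‖ with hH
  -- positivity of effNoise for any channel vector
  have hpos : ∀ (g : Fin L → ℂ) (α : ℂ), 0 < effNoise ρ g a α := by
    intro g α
    by_cases hα : α = 0
    · subst hα
      have h1 : (0:ℝ) < ∑ ℓ, ‖(0:ℂ) * g ℓ - a ℓ‖ ^ 2 := by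
        have he : ∀ ℓ, ‖(0:ℂ) * g ℓ - a ℓ‖ ^ 2 = ‖a ℓ‖ ^ 2 := fun ℓ => by simp
        simp only [he]
        exact Finset.sum_pos' (fun i _ => by positivity)
          ⟨ℓ0, Finset.mem_univ _, pow_pos hA0 2⟩
      have := mul_pos hρ h1
      unfold effNoise
      nlinarith [sq_nonneg ‖(0:ℂ)‖]
    · have : (0:ℝ) < ‖α‖ ^ 2 := pow_pos (norm_pos_iff.mpr hα) 2
      have h2 : (0:ℝ) ≤ ∑ ℓ, ‖α * g ℓ - a ℓ‖ ^ 2 :=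
        Finset.sum_nonneg fun i _ => by positivity
      unfold effNoise
      nlinarith
  -- lower bound on effNoise ρ h' a
  set c : ℝ := min (ρ * (A / 2) ^ 2) (A ^ 2 / (4 * H ^ 2 + 1)) with hc
  have hc0 : 0 < c := by
    apply lt_min
    · positivity
    · positivity
  have hlb : ∀ α : ℂ, c ≤ effNoise ρ h' a α := by
    intro α
    have hsum : (0:ℝ) ≤ ∑ ℓ, ‖α * h' ℓ - a ℓ‖ ^ 2 :=
      Finset.sum_nonneg fun i _ => by positivity
    have hterm : ‖α * h' ℓ0 - a ℓ0‖ ^ 2 ≤ ∑ ℓ, ‖α * h' ℓ - a ℓ‖ ^ 2 :=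
      Finset.single_le_sum (f := fun ℓ => ‖α * h' ℓ - a ℓ‖ ^ 2)
        (fun i _ => by positivity) (Finset.mem_univ ℓ0)
    by_cases hcase : ‖α‖ * H ≤ A / 2
    · -- then ‖α h'ℓ0 - aℓ0‖ ≥ A/2
      have h1 : A - ‖α‖ * H ≤ ‖α * h' ℓ0 - a ℓ0‖ := by
        have := norm_sub_norm_le (a ℓ0) (α * h' ℓ0)
        have h2 : ‖α * h' ℓ0‖ = ‖α‖ * H := by rw [norm_mul]
        calc A - ‖α‖ * H = ‖a ℓ0‖ - ‖α * h' ℓ0‖ := by rw [h2]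
          _ ≤ ‖a ℓ0 - α * h' ℓ0‖ := norm_sub_norm_le _ _
          _ = ‖α * h' ℓ0 - a ℓ0‖ := norm_sub_rev _ _
      have h3 : A / 2 ≤ ‖α * h' ℓ0 - a ℓ0‖ := by linarith
      have h4 : (A / 2) ^ 2 ≤ ‖α * h' ℓ0 - a ℓ0‖ ^ 2 := by
        apply pow_le_pow_left₀ (by positivity) h3
      have : c ≤ ρ * (A / 2) ^ 2 := min_le_left _ _
      unfold effNoise
      nlinarith [sq_nonneg ‖α‖, mul_le_mul_of_nonneg_left h4 hρ.le,
        mul_le_mul_of_nonneg_left hterm hρ.le]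
    · push_neg at hcase
      have hH0 : 0 < H := by
        by_contra hH0
        push_neg at hH0
        have : H = 0 := le_antisymm hH0 (norm_nonneg _)
        rw [this, mul_zero] at hcase
        linarith
      have h5 : A / (2 * H) < ‖α‖ := by
        rw [div_lt_iff₀ (by positivity)]
        nlinarith
      have h6 : A ^ 2 / (4 * H ^ 2 + 1) ≤ ‖α‖ ^ 2 := by
        rw [div_le_iff₀ (by positivity)]
        nlinarith [sq_nonneg (A - 2 * H * ‖α‖), sq_nonneg ‖α‖, mul_pos hA0 hH0]
      have : c ≤ A ^ 2 / (4 * H ^ 2 + 1) := min_le_right _ _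
      unfold effNoise
      nlinarith [mul_nonneg hρ.le hsum]
  -- boundedness above of LHS family
  set B : ℝ := max (Real.log (ρ / c)) 0 with hB
  have hbdd : BddAbove (Set.range fun α : ℂ =>
      max (Real.log (ρ / effNoise ρ h' a α)) 0) := by
    refine ⟨B, ?_⟩
    rintro x ⟨α, rfl⟩
    apply max_le_max _ le_rfl
    apply Real.log_le_log (div_pos hρ (hpos h' α))
    exact div_le_div_of_nonneg_left hρ.le hc0 (hlb α)
  -- main comparison
  apply ciSup_le
  intro α
  have hQ : effNoise ρ h' a ((‖α‖ : ℝ) : ℂ) ≤ effNoise ρ h a α := by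
    unfold effNoise
    have hs : ∑ ℓ, ‖((‖α‖ : ℝ) : ℂ) * h' ℓ - a ℓ‖ ^ 2
        ≤ ∑ ℓ, ‖α * h ℓ - a ℓ‖ ^ 2 := by
      apply Finset.sum_le_sum
      intro i _
      exact pow_le_pow_left₀ (norm_nonneg _) (key_term α (h i) (a i) (h' i) (hh' i)) 2
    have hn : ‖((‖α‖ : ℝ) : ℂ)‖ = ‖α‖ := by
      rw [Complex.norm_real, Real.norm_eq_abs, _root_.abs_of_nonneg (norm_nonneg α)]
    rw [hn]
    nlinarith [mul_le_mul_of_nonneg_left hs hρ.le]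
  calc max (Real.log (ρ / effNoise ρ h a α)) 0
      ≤ max (Real.log (ρ / effNoise ρ h' a ((‖α‖ : ℝ) : ℂ))) 0 := by
        apply max_le_max _ le_rfl
        apply Real.log_le_log (div_pos hρ (hpos h α))
        exact div_le_div_of_nonneg_left hρ.le (hpos h' _) hQ
    _ ≤ ⨆ β : ℂ, max (Real.log (ρ / effNoise ρ h' a β)) 0 :=
        le_ciSup hbdd _
end

section
/- Let L ≥ 1, ρ > 0, h ∈ ℂ^L, and let a ∈ ℤ[i]^L be a nonzero vector of Gaussian integers. Define h' ∈ ℂ^L by h'_ℓ := |h_ℓ|·a_ℓ/|a_ℓ| if a_ℓ ≠ 0 and h'_ℓ := |h_ℓ| otherwise. Then the phase precoded computation rate with optimal phases equals sup_{α ∈ ℂ} log⁺( ρ / (ρ‖α h' − a‖² + |α|²) ) = log⁺( (1 + ρ‖h‖²) / ( ‖a‖² + ρ( ‖h‖²‖a‖² − (Σ_{ℓ=1}^L |h_ℓ||a_ℓ|)² ) ) ). -/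
open Complex Finset GaussianInt

private lemma quad_norm (α : ℂ) (r t : ℝ) :
    ‖α * r - (t:ℂ)‖^2 = ‖α‖^2 * r^2 - 2*α.re*(r*t) + t^2 := by
  simp only [Complex.sq_norm, Complex.normSq_apply, Complex.sub_re,
    Complex.mul_re, Complex.ofReal_re, Complex.ofReal_im, Complex.sub_im, Complex.mul_im]
  ring

/-- closed form for the phase precoded computation rate with the
optimal phases, for a nonzero vector of Gaussian integer coefficients. -/
theorem precoded_rate_closed_form (L : ℕ) (hL : 1 ≤ L) (ρ : ℝ) (hρ : 0 < ρ)
    (h : Fin L → ℂ) (a : Fin L → GaussianInt) (ha : a ≠ 0) (h' : Fin L → ℂ)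
    (hh' : ∀ ℓ, h' ℓ = if toComplex (a ℓ) = 0 then ((‖h ℓ‖ : ℝ) : ℂ)
        else ((‖h ℓ‖ : ℝ) : ℂ) * toComplex (a ℓ) / ((‖toComplex (a ℓ)‖ : ℝ) : ℂ)) :
    (⨆ α : ℂ, max (Real.log (ρ / effNoise ρ h' (fun ℓ => toComplex (a ℓ)) α)) 0) =
      max (Real.log ((1 + ρ * ∑ ℓ, ‖h ℓ‖ ^ 2) /
        ((∑ ℓ, ‖toComplex (a ℓ)‖ ^ 2) +
          ρ * ((∑ ℓ, ‖h ℓ‖ ^ 2) * (∑ ℓ, ‖toComplex (a ℓ)‖ ^ 2) -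
            (∑ ℓ, ‖h ℓ‖ * ‖toComplex (a ℓ)‖) ^ 2)))) 0 := by
  set H := ∑ ℓ, ‖h ℓ‖ ^ 2 with hHdef
  set A := ∑ ℓ, ‖toComplex (a ℓ)‖ ^ 2 with hAdef
  set S := ∑ ℓ, ‖h ℓ‖ * ‖toComplex (a ℓ)‖ with hSdef
  set c : ℝ := ρ * H + 1 with hcdef
  set D : ℝ := A + ρ * (H * A - S ^ 2) with hDdef
  -- basic positivity
  have hHnn : 0 ≤ H := Finset.sum_nonneg fun ℓ _ => by positivity
  have hc : 0 < c := by positivity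
  have hApos : 0 < A := by
    obtain ⟨ℓ, hℓ⟩ : ∃ ℓ, a ℓ ≠ 0 := by
      by_contra hcon
      push_neg at hcon
      exact ha (funext hcon)
    have hz : toComplex (a ℓ) ≠ 0 := by
      simpa [GaussianInt.toComplex_eq_zero] using hℓ
    refine Finset.sum_pos' (fun i _ => by positivity) ⟨ℓ, Finset.mem_univ ℓ, ?_⟩
    have : 0 < ‖toComplex (a ℓ)‖ := norm_pos_iff.mpr hz
    positivity
  have hCS : S ^ 2 ≤ H * A :=
    Finset.sum_mul_sq_le_sq_mul_sq Finset.univ (fun ℓ => ‖h ℓ‖) (fun ℓ => ‖toComplex (a ℓ)‖)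
  have hD : 0 < D := by
    have : 0 ≤ ρ * (H * A - S ^ 2) := by
      have := sub_nonneg.mpr hCS; positivity
    linarith
  -- quadratic form of the effective noise
  have hQ : ∀ α : ℂ, effNoise ρ h' (fun ℓ => toComplex (a ℓ)) α
      = c * ‖α‖ ^ 2 - 2 * ρ * S * α.re + ρ * A := by
    intro α
    have hsum : ∀ ℓ, ‖α * h' ℓ - toComplex (a ℓ)‖ ^ 2
        = ‖α‖ ^ 2 * ‖h ℓ‖ ^ 2 - 2 * α.re * (‖h ℓ‖ * ‖toComplex (a ℓ)‖)
          + ‖toComplex (a ℓ)‖ ^ 2 := by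
      intro ℓ
      rw [hh' ℓ]
      by_cases hz : toComplex (a ℓ) = 0
      · simp only [hz, if_pos]
        simpa [hz] using quad_norm α ‖h ℓ‖ 0
      · rw [if_neg hz]
        have ht : (‖toComplex (a ℓ)‖ : ℝ) ≠ 0 := norm_ne_zero_iff.mpr hz
        have key : α * ((‖h ℓ‖ : ℂ) * toComplex (a ℓ) / ((‖toComplex (a ℓ)‖ : ℝ) : ℂ))
            - toComplex (a ℓ)
            = (α * (‖h ℓ‖ : ℂ) - ((‖toComplex (a ℓ)‖ : ℝ) : ℂ)) *
              (toComplex (a ℓ) / ((‖toComplex (a ℓ)‖ : ℝ) : ℂ)) := by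
          have htc : ((‖toComplex (a ℓ)‖ : ℝ) : ℂ) ≠ 0 := by
            exact_mod_cast Complex.ofReal_ne_zero.mpr ht
          rw [← mul_div_assoc, ← mul_div_assoc, eq_div_iff htc, sub_mul,
            div_mul_cancel₀ _ htc]
          ring
        rw [key, norm_mul]
        have hnorm : ‖toComplex (a ℓ) / ((‖toComplex (a ℓ)‖ : ℝ) : ℂ)‖ = 1 := by
          rw [norm_div, Complex.norm_real, norm_norm]
          exact div_self ht
        rw [hnorm, mul_one]
        exact quad_norm α ‖h ℓ‖ ‖toComplex (a ℓ)‖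
    unfold effNoise
    rw [Finset.sum_congr rfl fun ℓ _ => hsum ℓ]
    rw [Finset.sum_add_distrib, Finset.sum_sub_distrib, ← Finset.mul_sum, ← Finset.mul_sum]
    rw [hcdef, hHdef, hAdef, hSdef]
    ring
  set Qmin : ℝ := ρ * D / c with hQmin
  have hQminpos : 0 < Qmin := by positivity
  -- lower bound
  have hlb : ∀ α : ℂ, Qmin ≤ effNoise ρ h' (fun ℓ => toComplex (a ℓ)) α := by
    intro α
    rw [hQ α]
    have hn : ‖α‖ ^ 2 = α.re ^ 2 + α.im ^ 2 := by
      rw [Complex.sq_norm, Complex.normSq_apply]; ring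
    rw [hn, hQmin, hDdef, hcdef]
    rw [div_le_iff₀ hc, hcdef]
    nlinarith [sq_nonneg ((ρ*H+1) * α.re - ρ * S), sq_nonneg ((ρ*H+1) * α.im)]
  -- value at optimum
  have hopt : effNoise ρ h' (fun ℓ => toComplex (a ℓ)) ((ρ * S / c : ℝ) : ℂ) = Qmin := by
    rw [hQ]
    have h1 : ‖((ρ * S / c : ℝ) : ℂ)‖ ^ 2 = (ρ * S / c) ^ 2 := by
      rw [Complex.norm_real, Real.norm_eq_abs, _root_.sq_abs]
    have h2 : ((ρ * S / c : ℝ) : ℂ).re = ρ * S / c := Complex.ofReal_re _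
    rw [h1, h2, hQmin, hDdef, hcdef]
    field_simp
    ring
  -- value of the rate at optimum matches RHS
  have hval : ρ / Qmin = (1 + ρ * H) / D := by
    rw [hQmin, hcdef]
    rw [div_div_eq_mul_div]
    rw [div_eq_div_iff (mul_pos hρ hD).ne' hD.ne']
    ring
  have hbound : ∀ α : ℂ, max (Real.log (ρ / effNoise ρ h' (fun ℓ => toComplex (a ℓ)) α)) 0
      ≤ max (Real.log ((1 + ρ * H) / D)) 0 := by
    intro α
    refine max_le_max ?_ le_rfl
    rw [← hval]
    apply Real.log_le_log
    · exact div_pos hρ (lt_of_lt_of_le hQminpos (hlb α))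
    · exact div_le_div_of_nonneg_left hρ.le hQminpos (hlb α)
  have hba : BddAbove (Set.range fun α : ℂ =>
      max (Real.log (ρ / effNoise ρ h' (fun ℓ => toComplex (a ℓ)) α)) 0) := by
    refine ⟨max (Real.log ((1 + ρ * H) / D)) 0, ?_⟩
    rintro x ⟨α, rfl⟩
    exact hbound α
  apply le_antisymm
  · exact ciSup_le hbound
  · calc max (Real.log ((1 + ρ * H) / D)) 0
        = max (Real.log (ρ / effNoise ρ h' (fun ℓ => toComplex (a ℓ)) ((ρ * S / c : ℝ) : ℂ))) 0 := by
          rw [hopt, hval]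
      _ ≤ ⨆ α : ℂ, max (Real.log (ρ / effNoise ρ h' (fun ℓ => toComplex (a ℓ)) α)) 0 :=
          le_ciSup hba ((ρ * S / c : ℝ) : ℂ)
end

section
/- Let L ≥ 1, ρ > 0, h ∈ ℂ^L, and let a ∈ ℤ[i]^L be a nonzero vector of Gaussian integers. Then the computation rate satisfies sup_{α ∈ ℂ} log⁺( ρ / (ρ‖α h − a‖² + |α|²) ) = log⁺( (1 + ρ‖h‖²) / ( ‖a‖² + ρ( ‖h‖²‖a‖² − |⟨h,a⟩|² ) ) ). -/
open Complex Finset GaussianInt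

lemma rate_aux (L : ℕ) (ρ : ℝ) (hρ : 0 < ρ) (h a' : Fin L → ℂ)
    (htpos : 0 < ∑ ℓ, ‖a' ℓ‖ ^ 2) :
    (⨆ α : ℂ, max (Real.log (ρ / effNoise ρ h a' α)) 0) =
      max (Real.log ((1 + ρ * ∑ ℓ, ‖h ℓ‖ ^ 2) /
        ((∑ ℓ, ‖a' ℓ‖ ^ 2) +
          ρ * ((∑ ℓ, ‖h ℓ‖ ^ 2) * (∑ ℓ, ‖a' ℓ‖ ^ 2) -
            ‖∑ ℓ, h ℓ * (starRingEnd ℂ) (a' ℓ)‖ ^ 2)))) 0 := by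
  set s := ∑ ℓ, ‖h ℓ‖ ^ 2 with hs
  set t := ∑ ℓ, ‖a' ℓ‖ ^ 2 with ht
  set c := ∑ ℓ, h ℓ * (starRingEnd ℂ) (a' ℓ) with hc
  have hs0 : 0 ≤ s := Finset.sum_nonneg fun _ _ => sq_nonneg _
  have hA : 0 < 1 + ρ * s := by nlinarith
  -- Cauchy-Schwarz
  have cs : ‖c‖ ^ 2 ≤ s * t := by
    have key := norm_inner_le_norm (𝕜 := ℂ)
      ((WithLp.equiv 2 (Fin L → ℂ)).symm a') ((WithLp.equiv 2 (Fin L → ℂ)).symm h)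
    rw [EuclideanSpace.norm_eq, EuclideanSpace.norm_eq] at key
    simp only [PiLp.inner_apply, RCLike.inner_apply, WithLp.equiv_symm_apply, WithLp.ofLp_toLp, PiLp.toLp_apply] at key
    have hcc : ‖c‖ = ‖∑ ℓ, (starRingEnd ℂ) (a' ℓ) * h ℓ‖ := by
      congr 1; rw [hc]; exact Finset.sum_congr rfl fun ℓ _ => mul_comm _ _
    rw [hcc]
    have h1 : Real.sqrt (∑ i, ‖a' i‖ ^ 2) ^ 2 = t := Real.sq_sqrt htpos.le
    have h2 : Real.sqrt (∑ i, ‖h i‖ ^ 2) ^ 2 = s := Real.sq_sqrt hs0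
    nlinarith [norm_nonneg (∑ ℓ, (starRingEnd ℂ) (a' ℓ) * h ℓ),
      Real.sqrt_nonneg (∑ i, ‖a' i‖ ^ 2), Real.sqrt_nonneg (∑ i, ‖h i‖ ^ 2)]
  set D := t + ρ * (s * t - ‖c‖ ^ 2) with hD
  have hDpos : 0 < D := by nlinarith
  -- expansion
  have expand : ∀ α : ℂ, effNoise ρ h a' α
      = (1 + ρ * s) * ‖α‖ ^ 2 - 2 * ρ * (α * c).re + ρ * t := by
    intro α
    unfold effNoise
    have e1 : ∀ ℓ : Fin L, ‖α * h ℓ - a' ℓ‖ ^ 2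
        = ‖α‖ ^ 2 * ‖h ℓ‖ ^ 2 - 2 * (α * (h ℓ * (starRingEnd ℂ) (a' ℓ))).re + ‖a' ℓ‖ ^ 2 := by
      intro ℓ
      simp only [Complex.sq_norm, Complex.normSq_apply, Complex.sub_re,
        Complex.sub_im, Complex.mul_re, Complex.mul_im, Complex.conj_re, Complex.conj_im]
      ring
    rw [Finset.sum_congr rfl fun ℓ _ => e1 ℓ]
    have e3 : (α * c).re = ∑ ℓ, (α * (h ℓ * (starRingEnd ℂ) (a' ℓ))).re := by
      rw [hc, Finset.mul_sum, Complex.re_sum]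
    have e2 : ∑ ℓ, (‖α‖ ^ 2 * ‖h ℓ‖ ^ 2 - 2 * (α * (h ℓ * (starRingEnd ℂ) (a' ℓ))).re + ‖a' ℓ‖ ^ 2)
        = ‖α‖ ^ 2 * s - 2 * (α * c).re + t := by
      rw [Finset.sum_add_distrib, Finset.sum_sub_distrib, ← Finset.mul_sum, ← Finset.mul_sum, e3,
        ← ht, ← hs]
    rw [e2]; ring
  -- key identity
  have key : ∀ α : ℂ, (1 + ρ * s) * effNoise ρ h a' α
      = ‖((1 + ρ * s : ℝ) : ℂ) * α - (ρ : ℂ) * (starRingEnd ℂ) c‖ ^ 2 + ρ * D := by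
    intro α
    rw [expand α, hD]
    have hn : ∀ z : ℂ, ‖z‖ ^ 2 = z.re ^ 2 + z.im ^ 2 := by
      intro z
      rw [Complex.sq_norm, Complex.normSq_apply]; ring
    rw [hn, hn, hn]
    simp only [Complex.sub_re, Complex.sub_im, Complex.mul_re, Complex.mul_im,
      Complex.ofReal_re, Complex.ofReal_im, Complex.conj_re, Complex.conj_im]
    ring
  have hQlb : ∀ α : ℂ, ρ * D / (1 + ρ * s) ≤ effNoise ρ h a' α := by
    intro α
    rw [div_le_iff₀ hA]
    nlinarith [key α, sq_nonneg ‖((1 + ρ * s : ℝ) : ℂ) * α - (ρ : ℂ) * (starRingEnd ℂ) c‖]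
  have hQpos : ∀ α : ℂ, 0 < effNoise ρ h a' α := by
    intro α
    exact lt_of_lt_of_le (div_pos (mul_pos hρ hDpos) hA) (hQlb α)
  have hub : ∀ α : ℂ, max (Real.log (ρ / effNoise ρ h a' α)) 0
      ≤ max (Real.log ((1 + ρ * s) / D)) 0 := by
    intro α
    refine max_le_max ?_ le_rfl
    have h1 : ρ / effNoise ρ h a' α ≤ (1 + ρ * s) / D := by
      rw [div_le_div_iff₀ (hQpos α) hDpos]
      have := hQlb α
      rw [div_le_iff₀ hA] at this
      nlinarith
    exact Real.log_le_log (div_pos hρ (hQpos α)) h1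
  -- attaining point
  set α₀ : ℂ := ((ρ : ℂ) * (starRingEnd ℂ) c) / ((1 + ρ * s : ℝ) : ℂ) with hα₀
  have h0c : ((1 + ρ * s : ℝ) : ℂ) ≠ 0 := Complex.ofReal_ne_zero.mpr hA.ne'
  have hz : ((1 + ρ * s : ℝ) : ℂ) * α₀ - (ρ : ℂ) * (starRingEnd ℂ) c = 0 := by
    rw [hα₀, mul_div_cancel₀ _ h0c]; ring
  have hattain : effNoise ρ h a' α₀ = ρ * D / (1 + ρ * s) := by
    have hk := key α₀
    rw [hz, norm_zero] at hk
    rw [eq_div_iff hA.ne']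
    linarith [hk]
  have hval : max (Real.log (ρ / effNoise ρ h a' α₀)) 0
      = max (Real.log ((1 + ρ * s) / D)) 0 := by
    rw [hattain]
    congr 1
    congr 1
    field_simp
  apply le_antisymm
  · exact ciSup_le hub
  · rw [← hval]
    exact le_ciSup ⟨max (Real.log ((1 + ρ * s) / D)) 0, by rintro x ⟨α, rfl⟩; exact hub α⟩ α₀

/-- closed form for the computation rate of compute-and-forward
with channel vector `h` and nonzero Gaussian integer coefficient vector `a`. -/
theorem rate_closed_form (L : ℕ) (hL : 1 ≤ L) (ρ : ℝ) (hρ : 0 < ρ)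
    (h : Fin L → ℂ) (a : Fin L → GaussianInt) (ha : a ≠ 0) :
    (⨆ α : ℂ, max (Real.log (ρ / effNoise ρ h (fun ℓ => toComplex (a ℓ)) α)) 0) =
      max (Real.log ((1 + ρ * ∑ ℓ, ‖h ℓ‖ ^ 2) /
        ((∑ ℓ, ‖toComplex (a ℓ)‖ ^ 2) +
          ρ * ((∑ ℓ, ‖h ℓ‖ ^ 2) * (∑ ℓ, ‖toComplex (a ℓ)‖ ^ 2) -
            ‖∑ ℓ, h ℓ * (starRingEnd ℂ) (toComplex (a ℓ))‖ ^ 2)))) 0 := by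
  apply rate_aux L ρ hρ h (fun ℓ => toComplex (a ℓ))
  obtain ⟨ℓ₀, hℓ₀⟩ := Function.ne_iff.mp ha
  have h1 : toComplex (a ℓ₀) ≠ 0 := by
    simpa [GaussianInt.toComplex_eq_zero] using hℓ₀
  have h2 : 0 < ‖toComplex (a ℓ₀)‖ ^ 2 := pow_pos (norm_pos_iff.mpr h1) 2
  calc (0:ℝ) < ‖toComplex (a ℓ₀)‖ ^ 2 := h2
    _ ≤ ∑ ℓ, ‖toComplex (a ℓ)‖ ^ 2 :=
      Finset.single_le_sum (f := fun ℓ => ‖toComplex (a ℓ)‖ ^ 2)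
        (fun i _ => sq_nonneg _) (Finset.mem_univ ℓ₀)
end

section
/- Let L ≥ 1, ρ > 0, h ∈ ℂ^L, a ∈ ℂ^L, and let φ_1,…,φ_L ∈ ℝ with Φ := diag(e^{iφ_1},…,e^{iφ_L}), so (hΦ)_ℓ = h_ℓ e^{iφ_ℓ}. Define M by M_{j,k} := δ_{j,k} − (ρ/(1 + ρ‖h‖²))·conj(h_j)·h_k. Then inf_{α ∈ ℂ} ( ρ‖α (hΦ) − a‖² + |α|² ) = ρ · ( a Φ^H M Φ a^H ), where a Φ^H M Φ a^H := Σ_{j,k} (aΦ^H)_j M_{j,k} conj((aΦ^H)_k). -/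
open Complex Finset

/-- with a phase precoding matrix `Φ = diag(e^{iφ_ℓ})`, the
minimal effective-noise energy for the precoded channel `hΦ` equals
`ρ · (aΦᴴ M Φaᴴ)` where `M = I − (ρ/(1+ρ‖h‖²)) hᴴ h`. -/
theorem inf_effNoise_precoded_quadform (L : ℕ) (hL : 1 ≤ L) (ρ : ℝ) (hρ : 0 < ρ)
    (h a : Fin L → ℂ) (φ : Fin L → ℝ) (M : Matrix (Fin L) (Fin L) ℂ)
    (hM : ∀ j k, M j k = (if j = k then (1 : ℂ) else 0) -
        ((ρ / (1 + ρ * ∑ ℓ, ‖h ℓ‖ ^ 2) : ℝ) : ℂ) * (starRingEnd ℂ) (h j) * h k) :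
    ((⨅ α : ℂ, effNoise ρ (fun ℓ => h ℓ * Complex.exp (Complex.I * (φ ℓ : ℂ))) a α : ℝ) : ℂ) =
      (ρ : ℂ) * ∑ j, ∑ k,
        (a j * Complex.exp (-(Complex.I * (φ j : ℂ)))) * M j k *
          (starRingEnd ℂ) (a k * Complex.exp (-(Complex.I * (φ k : ℂ)))) := by
  set g : Fin L → ℂ := fun ℓ => h ℓ * Complex.exp (Complex.I * (φ ℓ : ℂ)) with hg
  set G : ℝ := ∑ ℓ, Complex.normSq (g ℓ) with hG
  set A : ℝ := ∑ ℓ, Complex.normSq (a ℓ) with hA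
  set T : ℂ := ∑ ℓ, g ℓ * (starRingEnd ℂ) (a ℓ) with hT
  have hGnn : 0 ≤ G := Finset.sum_nonneg fun _ _ => Complex.normSq_nonneg _
  set D : ℝ := 1 + ρ * G with hD
  have hDpos : 0 < D := by positivity
  have hDne : D ≠ 0 := ne_of_gt hDpos
  set β : ℂ := (ρ : ℂ) * (starRingEnd ℂ) T / (D : ℂ) with hβ
  set m : ℝ := ρ * A - ρ ^ 2 * Complex.normSq T / D with hm
  have hnsq : ∀ z : ℂ, ‖z‖ ^ 2 = Complex.normSq z := by
    intro z; rw [Complex.sq_norm]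
  have hsum : ∀ α : ℂ, ∑ ℓ, ‖α * g ℓ - a ℓ‖ ^ 2
      = Complex.normSq α * G + A - 2 * (α * T).re := by
    intro α
    have h1 : ∀ ℓ : Fin L, ‖α * g ℓ - a ℓ‖ ^ 2
        = Complex.normSq α * Complex.normSq (g ℓ) + Complex.normSq (a ℓ)
          - 2 * (α * (g ℓ * (starRingEnd ℂ) (a ℓ))).re := by
      intro ℓ
      rw [hnsq, Complex.normSq_sub, Complex.normSq_mul, mul_assoc]
    have h2 : (α * T).re = ∑ ℓ, (α * (g ℓ * (starRingEnd ℂ) (a ℓ))).re := by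
      rw [hT, Finset.mul_sum, Complex.re_sum]
    simp only [h1]
    rw [Finset.sum_sub_distrib, Finset.sum_add_distrib, ← Finset.mul_sum, h2,
      ← Finset.mul_sum]
  have key : ∀ α : ℂ, effNoise ρ g a α = D * Complex.normSq (α - β) + m := by
    intro α
    have hβconj : (starRingEnd ℂ) β = ((ρ / D : ℝ) : ℂ) * T := by
      rw [hβ, map_div₀, map_mul]
      simp [Complex.conj_ofReal]
      ring
    have hnormβ : Complex.normSq β = ρ ^ 2 * Complex.normSq T / D ^ 2 := by
      rw [hβ, Complex.normSq_div, Complex.normSq_mul, Complex.normSq_conj]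
      simp [Complex.normSq_ofReal]
      ring
    have hre : (α * (starRingEnd ℂ) β).re = ρ / D * (α * T).re := by
      rw [hβconj, show α * (((ρ / D : ℝ) : ℂ) * T) = ((ρ / D : ℝ) : ℂ) * (α * T) by ring,
        Complex.re_ofReal_mul]
    unfold effNoise
    rw [hsum α, Complex.normSq_sub, hre, hnormβ, hnsq, hm]
    field_simp
    ring
  have hQβ : effNoise ρ g a β = m := by rw [key β]; simp
  have hlb : ∀ α, m ≤ effNoise ρ g a α := by
    intro α
    rw [key α]
    have := mul_nonneg hDpos.le (Complex.normSq_nonneg (α - β))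
    linarith
  have hinf : (⨅ α : ℂ, effNoise ρ g a α) = m := by
    apply le_antisymm
    · exact le_trans (ciInf_le ⟨m, by rintro x ⟨α, rfl⟩; exact hlb α⟩ β) (le_of_eq hQβ)
    · exact le_ciInf hlb
  rw [hinf]
  -- now the RHS
  set E : Fin L → ℂ := fun j => Complex.exp (-(Complex.I * (φ j : ℂ))) with hE
  have hEconj : ∀ j, (starRingEnd ℂ) (E j) = Complex.exp (Complex.I * (φ j : ℂ)) := by
    intro j
    rw [hE, ← Complex.exp_conj]
    simp [Complex.conj_ofReal]
  have hEunit : ∀ j, E j * (starRingEnd ℂ) (E j) = 1 := by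
    intro j
    rw [hEconj, hE, ← Complex.exp_add]
    simp
  have hGh : (∑ ℓ, ‖h ℓ‖ ^ 2) = G := by
    rw [hG]
    apply Finset.sum_congr rfl
    intro ℓ _
    have hu : Complex.normSq (Complex.exp (Complex.I * (φ ℓ : ℂ))) = 1 := by
      rw [Complex.normSq_eq_norm_sq, Complex.norm_exp]; simp
    rw [hnsq, hg]
    simp [Complex.normSq_mul, hu]
  have hconjT : (starRingEnd ℂ) T = ∑ j, a j * E j * (starRingEnd ℂ) (h j) := by
    rw [hT, map_sum]
    apply Finset.sum_congr rfl
    intro j _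
    rw [map_mul, map_mul, Complex.conj_conj]
    rw [show (starRingEnd ℂ) (Complex.exp (Complex.I * (φ j : ℂ))) = E j by
      rw [hE, ← Complex.exp_conj]; simp [Complex.conj_ofReal]]
    ring
  have hTsum : (∑ k, h k * (starRingEnd ℂ) (a k * E k)) = T := by
    rw [hT]
    apply Finset.sum_congr rfl
    intro k _
    rw [map_mul, hEconj, hg]
    ring
  have hrow : ∀ j, (∑ k, (a j * E j) * M j k * (starRingEnd ℂ) (a k * E k))
      = a j * (starRingEnd ℂ) (a j)
        - ((ρ / D : ℝ) : ℂ) * (a j * E j * (starRingEnd ℂ) (h j)) * T := by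
    intro j
    have hM' : ∀ k, M j k = (if j = k then (1 : ℂ) else 0) -
        ((ρ / D : ℝ) : ℂ) * (starRingEnd ℂ) (h j) * h k := by
      intro k; rw [hM j k, hGh, hD]
    simp only [hM', sub_mul, mul_sub]
    rw [Finset.sum_sub_distrib]
    congr 1
    · simp only [mul_ite, ite_mul, mul_one, mul_zero, zero_mul, one_mul]
      rw [Finset.sum_ite_eq, if_pos (Finset.mem_univ j), map_mul]
      have := hEunit j
      calc a j * E j * ((starRingEnd ℂ) (a j) * (starRingEnd ℂ) (E j))
          = a j * (starRingEnd ℂ) (a j) * (E j * (starRingEnd ℂ) (E j)) := by ring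
        _ = a j * (starRingEnd ℂ) (a j) := by rw [this, mul_one]
    · rw [← hTsum, Finset.mul_sum]
      apply Finset.sum_congr rfl
      intro k _
      ring
  rw [Finset.sum_congr rfl (fun j _ => hrow j), Finset.sum_sub_distrib, ← Finset.sum_mul,
    ← Finset.mul_sum, ← hconjT]
  have h1 : (∑ j, a j * (starRingEnd ℂ) (a j)) = (A : ℂ) := by
    rw [hA]
    push_cast
    exact Finset.sum_congr rfl fun j _ => Complex.mul_conj (a j)
  have h2 : (starRingEnd ℂ) T * T = (Complex.normSq T : ℂ) := by
    rw [mul_comm, Complex.mul_conj]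
  rw [h1]
  rw [mul_assoc (((ρ / D : ℝ) : ℂ)), h2]
  rw [hm]
  push_cast
  have : (D : ℂ) ≠ 0 := by exact_mod_cast hDne
  field_simp
end
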